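/- (Lemma 2.) If d and d' are admissible disclosure policies and d is more transparent than d', then π_d(θ) ≥ π_{d'}(θ) for every θ ∈ Θ. -/

import Mathlib

open Set MeasureTheory

noncomputable section

/-- The set of belief-compatible emission levels under disclosure policy `d`,
on the emission space `E = [0, ebar]`. -/
def BCset (ebar : ℝ) (d : ℝ → ℝ) : Set ℝ :=
  {e | e ∈ Icc 0 ebar ∧ ∀ e' ∈ Icc 0 ebar, d e' = d e → e' ≤ e}

/-- `d` is more transparent than `d'`: the fibers of `d` refine those of `d'`. -/
def MoreTransparent (ebar : ℝ) (d d' : ℝ → ℝ) : Prop :=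
  ∀ e₁ ∈ Icc (0:ℝ) ebar, ∀ e₂ ∈ Icc (0:ℝ) ebar, d e₁ = d e₂ → d' e₁ = d' e₂

/-- A policy is admissible if for every type `θ ∈ Θ`, the profit `π θ ·`
attains a maximum on the belief-compatible set. -/
def Admissible (ebar θl θh : ℝ) (π : ℝ → ℝ → ℝ) (d : ℝ → ℝ) : Prop :=
  ∀ θ ∈ Icc θl θh, ∃ e ∈ BCset ebar d, ∀ e' ∈ BCset ebar d, π θ e' ≤ π θ e

/-- The maximized profit `π_d(θ)` of type `θ` under policy `d`. -/
def profitFn (ebar : ℝ) (π : ℝ → ℝ → ℝ) (d : ℝ → ℝ) (θ : ℝ) : ℝ :=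
  sSup (π θ '' BCset ebar d)

/-- The equilibrium emission `γ_d(θ)`: the least maximizer of `π θ ·` on the
belief-compatible set. -/
def emissionFn (ebar : ℝ) (π : ℝ → ℝ → ℝ) (d : ℝ → ℝ) (θ : ℝ) : ℝ :=
  sInf {e | e ∈ BCset ebar d ∧ ∀ e' ∈ BCset ebar d, π θ e' ≤ π θ e}

/-- Expected profit `Π(d) = ∫ π_d(θ) f(θ) dθ`. -/
def ExpProfit (ebar θl θh : ℝ) (π : ℝ → ℝ → ℝ) (f : ℝ → ℝ) (d : ℝ → ℝ) : ℝ :=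
  ∫ θ in Icc θl θh, profitFn ebar π d θ * f θ

/-- Expected emission `Γ(d) = ∫ γ_d(θ) f(θ) dθ`. -/
def ExpEmission (ebar θl θh : ℝ) (π : ℝ → ℝ → ℝ) (f : ℝ → ℝ) (d : ℝ → ℝ) : ℝ :=
  ∫ θ in Icc θl θh, emissionFn ebar π d θ * f θ

/-- `d` is Pareto efficient: no admissible policy yields weakly higher expected
profit and weakly lower expected emission with at least one strict. -/
def Efficient (ebar θl θh : ℝ) (π : ℝ → ℝ → ℝ) (f : ℝ → ℝ) (d : ℝ → ℝ) : Prop :=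
  ¬ ∃ d' : ℝ → ℝ, Admissible ebar θl θh π d' ∧
      ExpProfit ebar θl θh π f d ≤ ExpProfit ebar θl θh π f d' ∧
      ExpEmission ebar θl θh π f d' ≤ ExpEmission ebar θl θh π f d ∧
      (ExpProfit ebar θl θh π f d < ExpProfit ebar θl θh π f d' ∨
        ExpEmission ebar θl θh π f d' < ExpEmission ebar θl θh π f d)

/-- Lemma 2: more transparency yields weakly higher profit, type by type. -/
theorem transparent_profit (ebar θl θh : ℝ) (hebar : 0 < ebar) (hθ : θl ≤ θh)
    (π : ℝ → ℝ → ℝ)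
    (hcont : ContinuousOn (fun p : ℝ × ℝ => π p.1 p.2) (Icc θl θh ×ˢ Icc 0 ebar))
    (hconc : ∀ θ ∈ Icc θl θh, StrictConcaveOn ℝ (Icc 0 ebar) (π θ))
    (hIR : ∀ θ ∈ Icc θl θh, π θ 0 < π θ ebar)
    (d d' : ℝ → ℝ)
    (hd : Admissible ebar θl θh π d) (hd' : Admissible ebar θl θh π d')
    (h : MoreTransparent ebar d d') :
    ∀ θ ∈ Icc θl θh, profitFn ebar π d' θ ≤ profitFn ebar π d θ := by
  intro θ hθm
  have hsub : BCset ebar d' ⊆ BCset ebar d := by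
    rintro e ⟨heI, hcomp⟩
    exact ⟨heI, fun e' he' hde => hcomp e' he' (h e' he' e heI hde)⟩
  obtain ⟨e, he, hmax⟩ := hd θ hθm
  have hne : (π θ '' BCset ebar d').Nonempty := by
    refine ⟨π θ ebar, ebar, ⟨⟨le_of_lt hebar, le_refl _⟩, fun e' he' _ => he'.2⟩, rfl⟩
  have hbdd : BddAbove (π θ '' BCset ebar d) := by
    refine ⟨π θ e, ?_⟩
    rintro x ⟨e', he', rfl⟩
    exact hmax e' he'
  exact csSup_le_csSup hbdd hne (Set.image_mono hsub)
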